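/- Let G be the directed path of length ℓ with a loop on the last vertex, i.e., vertices v_0, v_1, …, v_ℓ, edges (v_i, v_{i+1}) for 0 ≤ i < ℓ, and the loop (v_ℓ, v_ℓ). Then the associative spectrum of the graph algebra A(G) satisfies s_n(A(G)) = t_ℓ(n) for all n, where t_h(n) denotes the number of DFS trees of size n of height at most h. -/

import Mathlib

namespace AssocSpec

/-- Bracketings of products `x₁ x₂ ⋯ xₙ` represented as binary trees whose
leaves, read from left to right, are the variables `x₁, …, xₙ`. -/
inductive BTree : Type
  | leaf : BTree
  | node : BTree → BTree → BTree

namespace BTree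

/-- The size of a bracketing: its number of variables (leaves). -/
def size : BTree → ℕ
  | leaf => 1
  | node l r => l.size + r.size

/-- Evaluate a bracketing in a magma `(A, op)`, the leaves taking the values
`f k, f (k+1), …` from left to right. -/
def evalFrom {A : Type*} (op : A → A → A) : BTree → (ℕ → A) → ℕ → A
  | leaf, f, k => f k
  | node l r, f, k => op (evalFrom op l f k) (evalFrom op r f (k + l.size))

/-- The term operation induced by a bracketing `t` on a magma `(A, op)`;
the `i`-th variable (0-indexed) takes the value `f i`. -/
def termOp {A : Type*} (op : A → A → A) (t : BTree) (f : ℕ → A) : A :=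
  evalFrom op t f 0

/-- The depth sequence of the DFS tree `G(t)` of a bracketing `t`: the `i`-th
entry is the depth of the `i`-th variable (0-indexed) in `G(t)`. -/
def depths : BTree → List ℕ
  | leaf => [0]
  | node l r => l.depths ++ r.depths.map (· + 1)

/-- The depth of the `i`-th variable (0-indexed) in the DFS tree `G(t)`. -/
def depth (t : BTree) (i : ℕ) : ℕ := t.depths.getD i 0

/-- The height of the DFS tree `G(t)`: the maximum depth of a variable. -/
def height (t : BTree) : ℕ := t.depths.foldr max 0

/-- The edges of the DFS tree `G(t)`, the variables being indexed from the
given offset: `(p, c)` is an edge iff `x_p` is the parent of `x_c`. -/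
def edgesFrom : BTree → ℕ → List (ℕ × ℕ)
  | leaf, _ => []
  | node l r, k => (k, k + l.size) :: (l.edgesFrom k ++ r.edgesFrom (k + l.size))

/-- The edges of the DFS tree `G(t)` (variables indexed from `0`). -/
def edges (t : BTree) : List (ℕ × ℕ) := t.edgesFrom 0

end BTree

open Classical in
/-- The operation of the graph algebra of the digraph with vertex set `V` and
edge relation `E`; `none` plays the role of `∞`. -/
noncomputable def gaOp {V : Type*} (E : V → V → Prop) :
    Option V → Option V → Option V
  | some x, some y => if E x y then some x else none
  | _, _ => none

/-- The magma `(A, op)` satisfies the bracketing identity `t ≈ t'`. -/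
def Satisfies {A : Type*} (op : A → A → A) (t t' : BTree) : Prop :=
  ∀ f : ℕ → A, BTree.termOp op t f = BTree.termOp op t' f

/-- The `n`-th member `s_n` of the associative spectrum of the magma `(A, op)`:
the number of distinct term operations induced by bracketings of size `n`. -/
noncomputable def spectrum {A : Type*} (op : A → A → A) (n : ℕ) : ℕ :=
  Set.ncard {g : (ℕ → A) → A | ∃ t : BTree, t.size = n ∧ g = BTree.termOp op t}

/-- Reachability (by a walk) in the digraph with edge relation `E`. -/
def Reach {V : Type*} (E : V → V → Prop) : V → V → Prop :=
  Relation.ReflTransGen E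

/-- `u` and `v` lie in the same strongly connected component. -/
def SameSCC {V : Type*} (E : V → V → Prop) (u v : V) : Prop :=
  Reach E u v ∧ Reach E v u

/-- The strongly connected component of `v`, as a set of vertices. -/
def scc {V : Type*} (E : V → V → Prop) (v : V) : Set V :=
  {u | SameSCC E u v}

/-- `v` lies in a nontrivial strongly connected component (one carrying at
least one edge), i.e. `v` lies on a closed walk of positive length. -/
def InNontrivialSCC {V : Type*} (E : V → V → Prop) (v : V) : Prop :=
  ∃ u, E v u ∧ Reach E u v

/-- The induced subgraph on the set `K` (with the edge relation `E`) is an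
`m`-whirl: `K` is partitioned into blocks `B 0, …, B (m-1)` so that edges go
exactly from each block to the cyclically next one. -/
def IsWhirlOn {V : Type*} (E : V → V → Prop) (K : Set V) (m : ℕ) : Prop :=
  ∃ B : ZMod m → Set V,
    (∀ i, (B i).Nonempty) ∧
    (∀ i, B i ⊆ K) ∧
    (∀ x ∈ K, ∃! i, x ∈ B i) ∧
    (∀ x ∈ K, ∀ y ∈ K, (E x y ↔ ∃ i, x ∈ B i ∧ y ∈ B (i + 1)))

/-- `p 0 → p 1 → ⋯ → p len` is a path (a walk with pairwise distinct
vertices) in the digraph with edge relation `E`. -/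
def IsPath {V : Type*} (E : V → V → Prop) (len : ℕ) (p : ℕ → V) : Prop :=
  (∀ i < len, E (p i) (p (i + 1))) ∧
  (∀ i ≤ len, ∀ j ≤ len, p i = p j → i = j)

/-- The walk `p 0 → ⋯ → p len` is pleasant: all its vertices belong to
trivial strongly connected components. -/
def IsPleasant {V : Type*} (E : V → V → Prop) (len : ℕ) (p : ℕ → V) : Prop :=
  ∀ i ≤ len, ¬ InNontrivialSCC E (p i)

/-- The connected component `K` (of an undirected graph) is complete
bipartite: it splits into two nonempty parts with edges exactly between
vertices of different parts. -/
def IsCompleteBipartiteOn {V : Type*} (E : V → V → Prop) (K : Set V) : Prop :=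
  ∃ B1 B2 : Set V, B1.Nonempty ∧ B2.Nonempty ∧ B1 ∪ B2 = K ∧ B1 ∩ B2 = ∅ ∧
    ∀ x ∈ K, ∀ y ∈ K, (E x y ↔ (x ∈ B1 ∧ y ∈ B2) ∨ (x ∈ B2 ∧ y ∈ B1))

/-- A DFS tree of size `n`: a rooted directed tree on the vertices
`x₁, …, xₙ` (here `Fin n`, the root being `0`), given by its parent function,
such that the parent of every non-root vertex precedes it and the vertex set
of the induced subtree rooted at any vertex `i` is an interval `[i, i']`.
(The parent of the root is, by convention, the root itself.) -/
structure DFSTree (n : ℕ) where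
  parent : Fin n → Fin n
  parent_lt : ∀ i : Fin n, 0 < (i : ℕ) → (parent i : ℕ) < (i : ℕ)
  parent_root : ∀ i : Fin n, (i : ℕ) = 0 → parent i = i
  interval : ∀ i j k : Fin n, i ≤ j → j ≤ k →
    (∃ a : ℕ, parent^[a] k = i) → (∃ a : ℕ, parent^[a] j = i)

/-- The depth of the vertex `i` in a DFS tree: the length of the path from
the root to `i`. -/
noncomputable def DFSTree.depth {n : ℕ} (T : DFSTree n) (i : Fin n) : ℕ :=
  sInf {k : ℕ | (T.parent^[k] i : ℕ) = 0}

/-- The height of a DFS tree: the maximum depth of a vertex. -/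
noncomputable def DFSTree.height {n : ℕ} (T : DFSTree n) : ℕ :=
  Finset.univ.sup fun i => T.depth i

/-- The vertex `i` is a leaf (childless vertex) of the DFS tree `T`. -/
def DFSTree.IsLeaf {n : ℕ} (T : DFSTree n) (i : Fin n) : Prop :=
  ∀ j : Fin n, T.parent j = i → j = i

/-- `t_h(n)`: the number of DFS trees of size `n` of height at most `h`. -/
noncomputable def tcount (h n : ℕ) : ℕ :=
  Nat.card {T : DFSTree n // T.height ≤ h}

/-- `d` is a zag sequence: `d₁ = 0`, `d₂ = 1`, and
`1 ≤ d_{i+1} ≤ d_i + 1` for all `i` (1-indexed as in the paper;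
here `d : Fin n → ℕ` is 0-indexed). -/
def IsZag {n : ℕ} (d : Fin n → ℕ) : Prop :=
  (∀ h : 0 < n, d ⟨0, h⟩ = 0) ∧
  (∀ h : 1 < n, d ⟨1, h⟩ = 1) ∧
  (∀ i : ℕ, ∀ h : i + 1 < n,
    1 ≤ d ⟨i + 1, h⟩ ∧ d ⟨i + 1, h⟩ ≤ d ⟨i, Nat.lt_of_succ_lt h⟩ + 1)

/-- `M(t,t')`: the largest `m` such that the depth sequences of the DFS trees
of the bracketings `t` and `t'` are congruent modulo `m`. -/
noncomputable def Mval (t t' : BTree) : ℕ :=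
  sSup {m : ℕ | ∀ i < t.size, t.depth i ≡ t'.depth i [MOD m]}

end AssocSpec
namespace AssocSpec

section Proof5

open BTree

lemma size_pos (t : BTree) : 1 ≤ t.size := by
  induction t with
  | leaf => simp [BTree.size]
  | node l r ihl ihr => simp [BTree.size]; omega

lemma depths_length (t : BTree) : t.depths.length = t.size := by
  induction t with
  | leaf => rfl
  | node l r ihl ihr => simp [BTree.depths, BTree.size, ihl, ihr]

lemma depths_getD_zero (t : BTree) : t.depths.getD 0 0 = 0 := by
  induction t with
  | leaf => rfl
  | node l r ihl ihr =>
      show (l.depths ++ r.depths.map (· + 1)).getD 0 0 = 0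
      rw [List.getD_append _ _ _ _ (by rw [depths_length]; exact size_pos l), ihl]

lemma depths_getD_left (l r : BTree) {i : ℕ} (h : i < l.size) :
    (BTree.node l r).depths.getD i 0 = l.depths.getD i 0 := by
  show (l.depths ++ r.depths.map (· + 1)).getD i 0 = _
  rw [List.getD_append _ _ _ _ (by rw [depths_length]; exact h)]

lemma depths_getD_right (l r : BTree) {i : ℕ} (h : i < r.size) :
    (BTree.node l r).depths.getD (l.size + i) 0 = r.depths.getD i 0 + 1 := by
  show (l.depths ++ r.depths.map (· + 1)).getD (l.size + i) 0 = _
  rw [List.getD_append_right _ _ _ _ (by rw [depths_length]; omega)]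
  rw [depths_length]
  have hi : i < (r.depths.map (· + 1)).length := by
    rw [List.length_map, depths_length]; exact h
  rw [show l.size + i - l.size = i by omega,
    List.getD_eq_getElem _ _ hi, List.getElem_map,
    List.getD_eq_getElem _ _ (by rw [depths_length]; exact h)]

end Proof5

end AssocSpec

namespace AssocSpec

section Proof5b

open BTree

attribute [local instance] Classical.propDecidable

/-- The edge relation of the path with a loop at the end. -/
def Epath (ℓ : ℕ) : Fin (ℓ + 1) → Fin (ℓ + 1) → Prop :=
  fun i j => (j : ℕ) = (i : ℕ) + 1 ∨ ((i : ℕ) = ℓ ∧ (j : ℕ) = ℓ)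

/-- Vertex at distance `d` below `v` in the path (saturating at `ℓ`). -/
def wvx (ℓ : ℕ) (v d : ℕ) : Fin (ℓ + 1) := ⟨min (v + d) ℓ, by omega⟩

lemma gaOp_none_left {V : Type*} (E : V → V → Prop) (x : Option V) :
    gaOp E none x = none := by cases x <;> rfl

lemma gaOp_none_right {V : Type*} (E : V → V → Prop) (x : Option V) :
    gaOp E x none = none := by cases x <;> rfl

lemma gaOp_some_some {V : Type*} (E : V → V → Prop) (x y : V) :
    gaOp E (some x) (some y) = if E x y then some x else none := rfl

lemma epath_iff (ℓ : ℕ) (u v : Fin (ℓ + 1)) :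
    Epath ℓ u v ↔ (v : ℕ) = min ((u : ℕ) + 1) ℓ := by
  have hu := u.isLt
  have hv := v.isLt
  unfold Epath
  omega

/-- `f` is (from offset `k`) the canonical satisfying assignment of the tree `t`. -/
def Good (ℓ : ℕ) (t : BTree) (f : ℕ → Option (Fin (ℓ + 1))) (k : ℕ) : Prop :=
  ∃ v0 : Fin (ℓ + 1), f k = some v0 ∧
    ∀ i < t.size, f (k + i) = some (wvx ℓ v0 (t.depths.getD i 0))

lemma eval_eq (ℓ : ℕ) (t : BTree) (f : ℕ → Option (Fin (ℓ + 1))) (k : ℕ) :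
    BTree.evalFrom (gaOp (Epath ℓ)) t f k = if Good ℓ t f k then f k else none := by
  induction t generalizing k with
  | leaf =>
      show f k = _
      rcases hf : f k with _ | v
      · rw [if_neg]
        rintro ⟨v0, h0, -⟩; rw [hf] at h0; cases h0
      · rw [if_pos]
        refine ⟨v, hf, ?_⟩
        intro i hi
        obtain rfl : i = 0 := by have h1 : i < 1 := hi; omega
        have : wvx ℓ v 0 = v := by
          apply Fin.ext; show min ((v:ℕ) + 0) ℓ = v
          have := v.isLt; omega
        rw [show BTree.leaf.depths.getD 0 0 = 0 from rfl, this,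
          show k + 0 = k from rfl, hf]
  | node l r ihl ihr =>
      show gaOp (Epath ℓ) (evalFrom (gaOp (Epath ℓ)) l f k)
          (evalFrom (gaOp (Epath ℓ)) r f (k + l.size)) = _
      rw [ihl, ihr]
      by_cases hl : Good ℓ l f k
      · by_cases hr : Good ℓ r f (k + l.size)
        · rw [if_pos hl, if_pos hr]
          obtain ⟨v0, hfk, hv⟩ := hl
          obtain ⟨u0, hfk2, hu⟩ := hr
          rw [hfk, hfk2, gaOp_some_some]
          by_cases hE : Epath ℓ v0 u0
          · rw [if_pos hE, if_pos]
            refine ⟨v0, hfk, ?_⟩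
            intro i hi
            rcases Nat.lt_or_ge i l.size with hil | hil
            · rw [depths_getD_left l r hil]; exact hv i hil
            · have hi' : i < l.size + r.size := hi
              have hj : i - l.size < r.size := by omega
              have hrw : l.size + (i - l.size) = i := by omega
              have hval := hu (i - l.size) hj
              have hd := depths_getD_right l r hj
              rw [hrw] at hd
              rw [show k + l.size + (i - l.size) = k + i by omega] at hval
              rw [hd, hval]
              congr 1
              apply Fin.ext
              show min ((u0:ℕ) + _) ℓ = min ((v0:ℕ) + (_ + 1)) ℓ
              have hEu := (epath_iff ℓ v0 u0).mp hE
              omega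
          · rw [if_neg hE, if_neg]
            rintro ⟨v0', h0, hall⟩
            rw [hfk] at h0
            obtain rfl : v0 = v0' := by injection h0
            have hls : l.size < (BTree.node l r).size := by
              show l.size < l.size + r.size
              have := size_pos r; omega
            have h1 := hall l.size hls
            rw [show (BTree.node l r).depths.getD l.size 0 = 1 by
              have := depths_getD_right l r (i := 0) (size_pos r)
              rw [Nat.add_zero] at this
              rw [this, depths_getD_zero]] at h1
            rw [hfk2] at h1
            obtain hu0 : u0 = wvx ℓ v0 1 := by injection h1
            apply hE
            rw [epath_iff, hu0]
            rfl
        · rw [if_pos hl, if_neg hr, gaOp_none_right, if_neg]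
          rintro ⟨v0, h0, hall⟩
          apply hr
          refine ⟨wvx ℓ v0 1, ?_, ?_⟩
          · have hls : l.size < (BTree.node l r).size := by
              show l.size < l.size + r.size
              have := size_pos r; omega
            have h1 := hall l.size hls
            rw [show (BTree.node l r).depths.getD l.size 0 = 1 by
              have := depths_getD_right l r (i := 0) (size_pos r)
              rw [Nat.add_zero] at this
              rw [this, depths_getD_zero]] at h1
            exact h1
          · intro j hj
            have hji : l.size + j < (BTree.node l r).size := by
              show l.size + j < l.size + r.size; omega
            have h1 := hall (l.size + j) hji
            rw [depths_getD_right l r hj, ← Nat.add_assoc] at h1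
            rw [h1]
            congr 1
            apply Fin.ext
            show min ((v0:ℕ) + (_ + 1)) ℓ = min ((min ((v0:ℕ) + 1) ℓ) + _) ℓ
            omega
      · rw [if_neg hl, gaOp_none_left, if_neg]
        rintro ⟨v0, h0, hall⟩
        apply hl
        refine ⟨v0, h0, ?_⟩
        intro i hi
        rw [← depths_getD_left l r hi]
        apply hall
        show i < l.size + r.size
        have := size_pos r; omega

end Proof5b

end AssocSpec

namespace AssocSpec

section Proof5c

open BTree

attribute [local instance] Classical.propDecidable

lemma wvx_min (ℓ v d : ℕ) : wvx ℓ v d = wvx ℓ v (min d ℓ) := by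
  apply Fin.ext; show min (v + d) ℓ = min (v + min d ℓ) ℓ; omega

lemma termOp_eq_iff (ℓ : ℕ) (n : ℕ) (hn : 1 ≤ n) (t t' : BTree)
    (ht : t.size = n) (ht' : t'.size = n) :
    BTree.termOp (gaOp (Epath ℓ)) t = BTree.termOp (gaOp (Epath ℓ)) t' ↔
      ∀ i < n, min (t.depths.getD i 0) ℓ = min (t'.depths.getD i 0) ℓ := by
  constructor
  · intro heq i hi
    set f : ℕ → Option (Fin (ℓ + 1)) :=
      fun j => if j < n then some (wvx ℓ 0 (t.depths.getD j 0)) else none with hfdef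
    have hf0 : f 0 = some (wvx ℓ 0 0) := by
      show (if 0 < n then _ else _) = _
      rw [if_pos (show 0 < n from hn), depths_getD_zero]
    have hgood : Good ℓ t f 0 := by
      refine ⟨wvx ℓ 0 0, hf0, ?_⟩
      intro j hj
      rw [ht] at hj
      show (if 0 + j < n then _ else _) = _
      rw [if_pos (show 0 + j < n by omega)]
      congr 1
      apply Fin.ext
      show min (0 + t.depths.getD (0 + j) 0) ℓ = min (((wvx ℓ 0 0 : Fin (ℓ+1)) : ℕ) + t.depths.getD j 0) ℓ
      have hw0 : ((wvx ℓ 0 0 : Fin (ℓ+1)) : ℕ) = min (0 + 0) ℓ := rfl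
      rw [hw0]
      simp only [Nat.zero_add]
      omega
    have h1 : BTree.termOp (gaOp (Epath ℓ)) t f = f 0 := by
      rw [BTree.termOp, eval_eq, if_pos hgood]
    have h2 := heq ▸ h1
    rw [BTree.termOp, eval_eq] at h2
    by_cases hg' : Good ℓ t' f 0
    · obtain ⟨v0', h0, hall⟩ := hg'
      have hv0' : v0' = wvx ℓ 0 0 := by
        rw [hf0] at h0; exact (Option.some.inj h0).symm
      have hfi := hall i (ht' ▸ hi)
      rw [hv0'] at hfi
      have hfi2 : f (0 + i) = some (wvx ℓ 0 (t.depths.getD (0 + i) 0)) := by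
        show (if 0 + i < n then _ else _) = _
        rw [if_pos (show 0 + i < n by omega)]
      rw [hfi2] at hfi
      have heq2 := Option.some.inj hfi
      have hval := congrArg Fin.val heq2
      have e1 : (wvx ℓ 0 (t.depths.getD (0 + i) 0) : ℕ) = min (0 + t.depths.getD (0 + i) 0) ℓ := rfl
      have e2 : (wvx ℓ (((wvx ℓ 0 0 : Fin (ℓ+1)) : ℕ)) (t'.depths.getD i 0) : ℕ)
          = min (min (0 + 0) ℓ + t'.depths.getD i 0) ℓ := rfl
      rw [e1, e2] at hval
      simp only [Nat.zero_add] at hval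
      omega
    · rw [if_neg hg'] at h2
      rw [hf0] at h2
      cases h2
  · intro hmin
    funext f
    rw [BTree.termOp, BTree.termOp, eval_eq, eval_eq]
    have : Good ℓ t f 0 ↔ Good ℓ t' f 0 := by
      constructor
      · rintro ⟨v0, h0, hall⟩
        refine ⟨v0, h0, ?_⟩
        intro i hi
        rw [ht'] at hi
        rw [hall i (ht ▸ hi), wvx_min, hmin i hi, ← wvx_min]
      · rintro ⟨v0, h0, hall⟩
        refine ⟨v0, h0, ?_⟩
        intro i hi
        rw [ht] at hi
        rw [hall i (ht' ▸ hi), wvx_min, ← hmin i hi, ← wvx_min]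
    rw [if_congr this rfl rfl]

/-- Zag condition on lists. -/
def ZagL (l : List ℕ) : Prop :=
  l.getD 0 0 = 0 ∧ ∀ i, i + 1 < l.length →
    1 ≤ l.getD (i + 1) 0 ∧ l.getD (i + 1) 0 ≤ l.getD i 0 + 1

lemma zagL_depths (t : BTree) : ZagL t.depths := by
  induction t with
  | leaf =>
      refine ⟨rfl, ?_⟩
      intro i hi
      simp [BTree.depths] at hi
  | node l r ihl ihr =>
      refine ⟨depths_getD_zero _, ?_⟩
      intro i hi
      rw [depths_length] at hi
      have hsz : (BTree.node l r).size = l.size + r.size := rfl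
      rw [hsz] at hi
      rcases Nat.lt_or_ge (i + 1) l.size with h1 | h1
      · rw [depths_getD_left l r h1, depths_getD_left l r (by omega)]
        exact ihl.2 i (by rw [depths_length]; exact h1)
      · rcases Nat.eq_or_lt_of_le h1 with h2 | h2
        · -- i + 1 = l.size : boundary
          have hd1 : (BTree.node l r).depths.getD (i+1) 0 = 1 := by
            have := depths_getD_right l r (i := 0) (size_pos r)
            rw [Nat.add_zero] at this
            rw [h2] at this
            rw [this, depths_getD_zero]
          rw [hd1]
          omega
        · -- i ≥ l.size
          have hj : i - l.size < r.size := by omega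
          have hj1 : i + 1 - l.size < r.size := by omega
          have e1 := depths_getD_right l r hj
          have e2 := depths_getD_right l r hj1
          rw [show l.size + (i - l.size) = i by omega] at e1
          rw [show l.size + (i + 1 - l.size) = i + 1 by omega] at e2
          rw [e1, e2]
          have := ihr.2 (i - l.size) (by rw [depths_length]; omega)
          rw [show i - l.size + 1 = i + 1 - l.size by omega] at this
          omega

/-- Attach a new rightmost leaf at depth `e` (assuming `1 ≤ e ≤ lastdepth + 1`). -/
def attachB : BTree → ℕ → BTree
  | .leaf, _ => .node .leaf .leaf
  | .node l r, e => if e ≤ 1 then .node (.node l r) .leaf else .node l (attachB r (e - 1))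

lemma attachB_depths (t : BTree) (e : ℕ) (h1 : 1 ≤ e)
    (h2 : e ≤ t.depths.getD (t.size - 1) 0 + 1) :
    (attachB t e).depths = t.depths ++ [e] := by
  induction t generalizing e with
  | leaf =>
      have : e = 1 := by
        have : BTree.leaf.depths.getD (BTree.leaf.size - 1) 0 = 0 := rfl
        omega
      subst this
      rfl
  | node l r ihl ihr =>
      have hlast : (BTree.node l r).depths.getD ((BTree.node l r).size - 1) 0
          = r.depths.getD (r.size - 1) 0 + 1 := by
        have hsz : (BTree.node l r).size = l.size + r.size := rfl
        have hj : r.size - 1 < r.size := by have := size_pos r; omega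
        have := depths_getD_right l r hj
        rw [show l.size + (r.size - 1) = (BTree.node l r).size - 1 by
          rw [hsz]; have := size_pos r; omega] at this
        exact this
      by_cases he : e ≤ 1
      · have : e = 1 := by omega
        subst this
        show (BTree.node (BTree.node l r) BTree.leaf).depths = _
        rfl
      · rw [show attachB (BTree.node l r) e = BTree.node l (attachB r (e - 1)) from
          if_neg he]
        show l.depths ++ ((attachB r (e-1)).depths).map (· + 1) = _
        rw [ihr (e - 1) (by omega) (by rw [hlast] at h2; omega)]
        show l.depths ++ (r.depths ++ [e-1]).map (· + 1) = (l.depths ++ r.depths.map (· + 1)) ++ [e]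
        rw [List.map_append, List.append_assoc]
        congr 2
        show [e - 1 + 1] = [e]
        congr 1
        omega

lemma exists_tree_of_zagL (l : List ℕ) (hl : 1 ≤ l.length) (hz : ZagL l) :
    ∃ t : BTree, t.depths = l := by
  induction l using List.reverseRecOn with
  | nil => simp at hl
  | append_singleton l' a ih =>
      rcases Nat.eq_zero_or_pos l'.length with h0 | h0
      · rw [List.length_eq_zero_iff] at h0
        subst h0
        have ha : a = 0 := hz.1
        subst ha
        exact ⟨BTree.leaf, rfl⟩
      · have hz' : ZagL l' := by
          constructor
          · have h := hz.1
            rw [List.getD_append _ _ _ _ h0] at h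
            exact h
          · intro i hi
            have := hz.2 i (by rw [List.length_append]; simpa using by omega)
            rw [List.getD_append _ _ _ _ hi, List.getD_append _ _ _ _ (by omega)] at this
            exact this
        obtain ⟨t', ht'⟩ := ih h0 hz'
        have hlen : l'.length - 1 + 1 = l'.length := by omega
        have hstep := hz.2 (l'.length - 1) (by rw [List.length_append]; simpa using by omega)
        rw [hlen] at hstep
        have hgetA : (l' ++ [a]).getD l'.length 0 = a :=
          by rw [List.getD_append_right _ _ _ _ (le_refl _), Nat.sub_self]; rfl
        rw [hgetA, List.getD_append _ _ _ _ (by omega)] at hstep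
        have hs : t'.size = l'.length := by rw [← depths_length, ht']
        refine ⟨attachB t' a, ?_⟩
        rw [attachB_depths t' a hstep.1 (by rw [ht', hs]; exact hstep.2), ht']

end Proof5c

end AssocSpec

namespace AssocSpec

section Proof5d

variable {n : ℕ}

lemma DFSTree.parent_le (T : DFSTree n) (i : Fin n) : (T.parent i : ℕ) ≤ i := by
  by_cases h : (i : ℕ) = 0
  · rw [T.parent_root i h]
  · exact le_of_lt (T.parent_lt i (by omega))

lemma DFSTree.iterate_le (T : DFSTree n) (a : ℕ) (i : Fin n) :
    (T.parent^[a] i : ℕ) ≤ i := by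
  induction a generalizing i with
  | zero => exact le_refl _
  | succ a ih =>
      rw [Function.iterate_succ_apply]
      exact le_trans (ih (T.parent i)) (T.parent_le i)

lemma DFSTree.exists_hit (T : DFSTree n) (i : Fin n) :
    ∃ k, (T.parent^[k] i : ℕ) = 0 := by
  have H : ∀ m, ∀ i : Fin n, (i : ℕ) ≤ m → ∃ k, (T.parent^[k] i : ℕ) = 0 := by
    intro m
    induction m with
    | zero => intro i hi; exact ⟨0, by rw [Function.iterate_zero_apply]; omega⟩
    | succ m ih =>
        intro i hi
        by_cases h : (i : ℕ) = 0
        · exact ⟨0, h⟩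
        · obtain ⟨k, hk⟩ := ih (T.parent i)
            (by have := T.parent_lt i (by omega); omega)
          exact ⟨k + 1, by rwa [Function.iterate_succ_apply]⟩
  exact H i i (le_refl _)

lemma DFSTree.depth_hit (T : DFSTree n) (i : Fin n) :
    (T.parent^[T.depth i] i : ℕ) = 0 :=
  Nat.sInf_mem (T.exists_hit i)

lemma DFSTree.depth_le (T : DFSTree n) (i : Fin n) {k : ℕ}
    (h : (T.parent^[k] i : ℕ) = 0) : T.depth i ≤ k :=
  Nat.sInf_le h

lemma DFSTree.depth_zero (T : DFSTree n) (i : Fin n) (h : (i : ℕ) = 0) :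
    T.depth i = 0 :=
  Nat.le_zero.mp (T.depth_le i (by rw [Function.iterate_zero_apply]; exact h))

lemma DFSTree.depth_succ (T : DFSTree n) (i : Fin n) (h : (i : ℕ) ≠ 0) :
    T.depth i = T.depth (T.parent i) + 1 := by
  apply le_antisymm
  · apply T.depth_le i
    rw [Function.iterate_succ_apply]
    exact T.depth_hit (T.parent i)
  · have hne : T.depth i ≠ 0 := by
      intro h0
      have := T.depth_hit i
      rw [h0, Function.iterate_zero_apply] at this
      exact h this
    obtain ⟨m, hm⟩ := Nat.exists_eq_succ_of_ne_zero hne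
    have := T.depth_hit i
    rw [hm, Function.iterate_succ_apply] at this
    have := T.depth_le (T.parent i) this
    omega

lemma DFSTree.depth_parent_le (T : DFSTree n) (i : Fin n) :
    T.depth (T.parent i) ≤ T.depth i := by
  by_cases h : (i : ℕ) = 0
  · rw [T.parent_root i h]
  · rw [T.depth_succ i h]; omega

lemma DFSTree.depth_ancestor_le (T : DFSTree n) (a : ℕ) (j i : Fin n)
    (h : T.parent^[a] j = i) : T.depth i ≤ T.depth j := by
  induction a generalizing j with
  | zero => rw [Function.iterate_zero_apply] at h; rw [h]
  | succ a ih =>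
      rw [Function.iterate_succ_apply] at h
      exact le_trans (ih (T.parent j) h) (T.depth_parent_le j)

lemma DFSTree.depth_ancestor_lt (T : DFSTree n) (a : ℕ) (j i : Fin n)
    (h : T.parent^[a] j = i) (hne : i ≠ j) : T.depth i < T.depth j := by
  cases a with
  | zero => rw [Function.iterate_zero_apply] at h; exact absurd h.symm hne
  | succ a =>
      by_cases hj : (j : ℕ) = 0
      · exfalso
        apply hne
        have hpj : T.parent j = j := T.parent_root j hj
        have : ∀ b, T.parent^[b] j = j := by
          intro b
          induction b with
          | zero => rfl
          | succ b ihb => rw [Function.iterate_succ_apply, hpj, ihb]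
        rw [this] at h; exact h.symm
      · rw [Function.iterate_succ_apply] at h
        have := T.depth_ancestor_le a (T.parent j) i h
        rw [T.depth_succ j hj]
        omega

lemma DFSTree.isZag_depth (T : DFSTree n) : IsZag (fun i : Fin n => T.depth i) := by
  refine ⟨?_, ?_, ?_⟩
  · intro h; exact T.depth_zero _ rfl
  · intro h
    have hv : ((⟨1, h⟩ : Fin n) : ℕ) = 1 := rfl
    show T.depth ⟨1, h⟩ = 1
    have h1 : ((⟨1, h⟩ : Fin n) : ℕ) ≠ 0 := by rw [hv]; omega
    rw [T.depth_succ _ h1]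
    have hp := T.parent_lt ⟨1, h⟩ (by rw [hv]; omega)
    rw [hv] at hp
    rw [T.depth_zero (T.parent ⟨1, h⟩) (by omega)]
  · intro i h
    set k : Fin n := ⟨i + 1, h⟩ with hk
    set jm : Fin n := ⟨i, Nat.lt_of_succ_lt h⟩ with hjm
    have hv : (k : ℕ) = i + 1 := rfl
    have hv2 : (jm : ℕ) = i := rfl
    have hne : (k : ℕ) ≠ 0 := by rw [hv]; omega
    constructor
    · show 1 ≤ T.depth k
      rw [T.depth_succ _ hne]; omega
    · show T.depth k ≤ T.depth jm + 1
      have hp : (T.parent k : ℕ) < (k : ℕ) := T.parent_lt k (by rw [hv]; omega)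
      have hple : T.parent k ≤ jm := by rw [Fin.le_def]; omega
      have hjk : jm ≤ k := by rw [Fin.le_def]; omega
      obtain ⟨a, ha⟩ := T.interval (T.parent k) jm k hple hjk
        ⟨1, by rw [Function.iterate_one]⟩
      have := T.depth_ancestor_le a jm (T.parent k) ha
      rw [T.depth_succ k hne]
      omega

lemma DFSTree.eq_of_depth_eq (T T' : DFSTree n)
    (h : ∀ i : Fin n, T.depth i = T'.depth i) : T = T' := by
  suffices hp : T.parent = T'.parent by
    cases T; cases T'; simpa using hp
  funext i
  by_cases hi : (i : ℕ) = 0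
  · rw [T.parent_root i hi, T'.parent_root i hi]
  · have hd : T.depth (T.parent i) = T.depth (T'.parent i) := by
      have e1 := T.depth_succ i hi
      have e2 := T'.depth_succ i hi
      rw [h i] at e1
      have e3 : T.depth (T.parent i) = T'.depth (T'.parent i) := by omega
      rw [e3, ← h (T'.parent i)]
    rcases lt_trichotomy ((T.parent i : ℕ)) ((T'.parent i : ℕ)) with hlt | heq | hgt
    · exfalso
      obtain ⟨a, ha⟩ := T.interval (T.parent i) (T'.parent i) i
        (by rw [Fin.le_def]; omega)
        (by rw [Fin.le_def]; exact le_of_lt (T'.parent_lt i (by omega)))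
        ⟨1, by rw [Function.iterate_one]⟩
      have := T.depth_ancestor_lt a (T'.parent i) (T.parent i) ha
        (by intro hc; rw [hc] at hlt; omega)
      omega
    · exact Fin.ext heq
    · exfalso
      obtain ⟨a, ha⟩ := T'.interval (T'.parent i) (T.parent i) i
        (by rw [Fin.le_def]; omega)
        (by rw [Fin.le_def]; exact le_of_lt (T.parent_lt i (by omega)))
        ⟨1, by rw [Function.iterate_one]⟩
      have := T'.depth_ancestor_lt a (T.parent i) (T'.parent i) ha
        (by intro hc; rw [hc] at hgt; omega)
      rw [← h (T'.parent i), ← h (T.parent i)] at this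
      omega

end Proof5d

end AssocSpec

namespace AssocSpec

section Proof5e

variable {n : ℕ}

/-- Extension of `d : Fin n → ℕ` to `ℕ`. -/
def dNf (n : ℕ) (d : Fin n → ℕ) : ℕ → ℕ := fun m => if h : m < n then d ⟨m, h⟩ else 0

/-- Parent function on indices: greatest `j < i` with `dN j + 1 = dN i`. -/
def pNf (n : ℕ) (d : Fin n → ℕ) : ℕ → ℕ :=
  fun i => Nat.findGreatest (fun j => dNf n d j + 1 = dNf n d i) (i - 1)

variable {d : Fin n → ℕ}

lemma dNf_val (i : Fin n) : dNf n d i = d i := by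
  show (if h : (i : ℕ) < n then _ else _) = _
  rw [dif_pos i.isLt]

lemma zag_dN0 (hz : IsZag d) (hn : 0 < n) : dNf n d 0 = 0 := by
  show (if h : 0 < n then _ else _) = _
  rw [dif_pos hn]
  exact hz.1 hn

lemma zag_step (hz : IsZag d) {i : ℕ} (h : i + 1 < n) :
    1 ≤ dNf n d (i + 1) ∧ dNf n d (i + 1) ≤ dNf n d i + 1 := by
  have := hz.2.2 i h
  show 1 ≤ (if h' : i + 1 < n then _ else _) ∧ (if h' : i + 1 < n then _ else _) ≤
    (if h' : i < n then _ else _) + 1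
  rw [dif_pos h, dif_pos (Nat.lt_of_succ_lt h)]
  exact this

lemma zag_pos (hz : IsZag d) {i : ℕ} (h0 : 0 < i) (h : i < n) : 1 ≤ dNf n d i := by
  obtain ⟨m, rfl⟩ := Nat.exists_eq_succ_of_ne_zero (by omega : i ≠ 0)
  exact (zag_step hz h).1

lemma zag_exists_parent (hz : IsZag d) {i : ℕ} (h0 : 0 < i) (h : i < n) :
    ∃ j, j < i ∧ dNf n d j + 1 = dNf n d i := by
  classical
  set j := Nat.findGreatest (fun j => dNf n d j < dNf n d i) (i - 1) with hj
  have hDi : 1 ≤ dNf n d i := zag_pos hz h0 h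
  have hD0 : dNf n d 0 < dNf n d i := by
    rw [zag_dN0 hz (by omega)]; omega
  have hPj : dNf n d j < dNf n d i := by
    rw [hj]
    exact Nat.findGreatest_spec (P := fun m => dNf n d m < dNf n d i) (Nat.zero_le (i - 1)) hD0
  have hjle : j ≤ i - 1 := Nat.findGreatest_le (i - 1)
  rcases Nat.eq_or_lt_of_le hjle with hje | hjlt
  · refine ⟨j, by omega, ?_⟩
    have := zag_step hz (show (i - 1) + 1 < n by omega)
    rw [show i - 1 + 1 = i by omega] at this
    rw [hje] at hPj ⊢
    omega
  · have hng : ¬ (dNf n d (j + 1) < dNf n d i) :=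
      Nat.findGreatest_is_greatest (P := fun m => dNf n d m < dNf n d i)
        (k := j + 1) (n := i - 1) (by rw [← hj]; omega) (by omega)
    have hst := zag_step hz (show j + 1 < n by omega)
    exact ⟨j, by omega, by omega⟩

lemma pNf_le (i : ℕ) : pNf n d i ≤ i - 1 := Nat.findGreatest_le (i - 1)

lemma pNf_spec (hz : IsZag d) {i : ℕ} (h0 : 0 < i) (h : i < n) :
    dNf n d (pNf n d i) + 1 = dNf n d i := by
  obtain ⟨j, hj1, hj2⟩ := zag_exists_parent hz h0 h
  exact Nat.findGreatest_spec (P := fun m => dNf n d m + 1 = dNf n d i)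
    (show j ≤ i - 1 by omega) hj2

lemma pNf_between (hz : IsZag d) {i : ℕ} (h0 : 0 < i) (h : i < n) :
    ∀ j, pNf n d i < j → j < i → dNf n d i ≤ dNf n d j := by
  have key : ∀ c j, i - j ≤ c → pNf n d i < j → j < i → dNf n d i ≤ dNf n d j := by
    intro c
    induction c with
    | zero => intro j h1 h2 h3; omega
    | succ c ih =>
        intro j h1 h2 h3
        have hj1 : dNf n d i ≤ dNf n d (j + 1) := by
          rcases Nat.eq_or_lt_of_le (show j + 1 ≤ i by omega) with he | hlt
          · rw [he]
          · exact ih (j + 1) (by omega) (by omega) (by omega)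
        have hst := zag_step hz (show j + 1 < n by omega)
        have hpn : pNf n d i = Nat.findGreatest (fun m => dNf n d m + 1 = dNf n d i) (i - 1) := rfl
        have hnP : ¬ (dNf n d j + 1 = dNf n d i) :=
          Nat.findGreatest_is_greatest (P := fun m => dNf n d m + 1 = dNf n d i)
            (k := j) (n := i - 1) (by rw [← hpn]; omega) (by omega)
        omega
  intro j h1 h2
  exact key (i - j) j (le_refl _) h1 h2

/-- The parent function of the constructed DFS tree. -/
def pTf (n : ℕ) (d : Fin n → ℕ) : Fin n → Fin n :=
  fun i => if h : (i : ℕ) = 0 then i else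
    ⟨pNf n d i, by have := pNf_le (d := d) (i : ℕ); have := i.isLt; omega⟩

lemma pTf_zero (i : Fin n) (h : (i : ℕ) = 0) : pTf n d i = i := dif_pos h

lemma pTf_val (i : Fin n) (h : (i : ℕ) ≠ 0) : (pTf n d i : ℕ) = pNf n d i := by
  rw [show pTf n d i = _ from dif_neg h]

lemma pTf_le (i : Fin n) : (pTf n d i : ℕ) ≤ (i : ℕ) := by
  by_cases h : (i : ℕ) = 0
  · rw [pTf_zero i h]
  · rw [pTf_val i h]; have := pNf_le (d := d) (i : ℕ); omega

lemma pTf_iterate_le (a : ℕ) (i : Fin n) : ((pTf n d)^[a] i : ℕ) ≤ (i : ℕ) := by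
  induction a generalizing i with
  | zero => rw [Function.iterate_zero_apply]
  | succ a ih =>
      rw [Function.iterate_succ_apply]
      exact le_trans (ih (pTf n d i)) (pTf_le i)

lemma anc_fwd (hz : IsZag d) : ∀ (a : ℕ) (k i : Fin n), (pTf n d)^[a] k = i →
    ∀ j : ℕ, (i : ℕ) < j → j ≤ (k : ℕ) → dNf n d i < dNf n d j := by
  intro a
  induction a with
  | zero =>
      intro k i h j h1 h2
      rw [Function.iterate_zero_apply] at h
      subst h
      omega
  | succ a ih =>
      intro k i h j h1 h2
      rw [Function.iterate_succ_apply] at h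
      by_cases hk : (k : ℕ) = 0
      · rw [pTf_zero k hk] at h
        have := pTf_iterate_le (d := d) a k
        rw [h] at this
        omega
      · have hpv : (pTf n d k : ℕ) = pNf n d k := pTf_val k hk
        have hplt : pNf n d (k : ℕ) < (k : ℕ) := by
          have := pNf_le (d := d) (k : ℕ); omega
        have hspec := pNf_spec hz (show 0 < (k:ℕ) by omega) k.isLt
        have hile : (i : ℕ) ≤ (pTf n d k : ℕ) := by
          have := pTf_iterate_le (d := d) a (pTf n d k)
          rw [h] at this
          exact this
        have hip : dNf n d i ≤ dNf n d (pNf n d k) := by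
          rcases Nat.eq_or_lt_of_le hile with he | hlt
          · rw [← hpv, ← he]
          · have := ih (pTf n d k) i h (pNf n d k) (by omega) (by omega)
            omega
        rcases Nat.lt_or_ge (pNf n d k) j with hgt | hle
        · rcases Nat.eq_or_lt_of_le h2 with he | hlt
          · rw [he]; omega
          · have := pNf_between hz (show 0 < (k:ℕ) by omega) k.isLt j hgt hlt
            omega
        · have := ih (pTf n d k) i h j h1 (by omega)
          omega

lemma anc_bwd (hz : IsZag d) : ∀ (m : ℕ) (k i : Fin n), (k : ℕ) ≤ m →
    (i : ℕ) ≤ (k : ℕ) →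
    (∀ j : ℕ, (i : ℕ) < j → j ≤ (k : ℕ) → dNf n d i < dNf n d j) →
    ∃ a, (pTf n d)^[a] k = i := by
  intro m
  induction m with
  | zero =>
      intro k i hk hik H
      refine ⟨0, ?_⟩
      rw [Function.iterate_zero_apply]
      apply Fin.ext
      omega
  | succ m ih =>
      intro k i hk hik H
      rcases Nat.eq_or_lt_of_le hik with he | hlt
      · exact ⟨0, by rw [Function.iterate_zero_apply]; exact (Fin.ext he.symm :)⟩
      · have hk0 : (k : ℕ) ≠ 0 := by omega
        have hpv : (pTf n d k : ℕ) = pNf n d k := pTf_val k hk0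
        have hplt : pNf n d (k : ℕ) < (k : ℕ) := by
          have := pNf_le (d := d) (k : ℕ); omega
        have hip : (i : ℕ) ≤ (pTf n d k : ℕ) := by
          by_contra hc
          have hbetw := pNf_between hz (show 0 < (k:ℕ) by omega) k.isLt i (by omega) hlt
          have := H k hlt (le_refl _)
          omega
        have Hp : ∀ j : ℕ, (i : ℕ) < j → j ≤ (pTf n d k : ℕ) →
            dNf n d i < dNf n d j := by
          intro j h1 h2
          exact H j h1 (by omega)
        obtain ⟨a, ha⟩ := ih (pTf n d k) i (by omega) hip Hp
        exact ⟨a + 1, by rw [Function.iterate_succ_apply, ha]⟩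

/-- The DFS tree constructed from a zag sequence. -/
def mkT (n : ℕ) (d : Fin n → ℕ) (hz : IsZag d) : DFSTree n where
  parent := pTf n d
  parent_lt := fun i h0 => by
    rw [pTf_val i (by omega)]
    have := pNf_le (d := d) (i : ℕ); omega
  parent_root := fun i h => pTf_zero i h
  interval := fun i j k hij hjk ⟨a, ha⟩ => by
    apply anc_bwd hz (j : ℕ) j i (le_refl _) hij
    intro m h1 h2
    exact anc_fwd hz a k i ha m h1 (le_trans h2 hjk)

lemma mkT_depth (hz : IsZag d) (i : Fin n) : (mkT n d hz).depth i = d i := by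
  have key : ∀ m (i : Fin n), (i : ℕ) ≤ m → (mkT n d hz).depth i = dNf n d i := by
    intro m
    induction m with
    | zero =>
        intro i hi
        rw [(mkT n d hz).depth_zero i (by omega), show ((i : ℕ)) = 0 by omega,
          zag_dN0 hz (by have := i.isLt; omega)]
    | succ m ih =>
        intro i hi
        by_cases h0 : (i : ℕ) = 0
        · rw [(mkT n d hz).depth_zero i h0, show ((i : ℕ)) = 0 from h0,
            zag_dN0 hz (by have := i.isLt; omega)]
        · rw [(mkT n d hz).depth_succ i h0]
          have hpar : (mkT n d hz).parent i = pTf n d i := rfl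
          have hpv : (pTf n d i : ℕ) = pNf n d i := pTf_val i h0
          have hplt : pNf n d (i : ℕ) < (i : ℕ) := by
            have := pNf_le (d := d) (i : ℕ); omega
          rw [hpar, ih (pTf n d i) (by omega)]
          have hspec := pNf_spec hz (show 0 < (i:ℕ) by omega) i.isLt
          rw [show ((pTf n d i : Fin n) : ℕ) = pNf n d i from hpv]
          omega
  rw [key i i (le_refl _), dNf_val]

end Proof5e

end AssocSpec

namespace AssocSpec

section Proof5f

variable {n ℓ : ℕ}

/-- The pivot type: zag sequences of length `n` bounded by `ℓ`. -/
def ZagBdd (n ℓ : ℕ) := {d : Fin n → ℕ // IsZag d ∧ ∀ i, d i ≤ ℓ}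

noncomputable def equivDFS (n ℓ : ℕ) : {T : DFSTree n // T.height ≤ ℓ} ≃ ZagBdd n ℓ := by
  apply Equiv.ofBijective (f := fun T =>
    ⟨fun i => T.1.depth i, T.1.isZag_depth, fun i =>
      le_trans (Finset.le_sup (f := fun i => T.1.depth i) (Finset.mem_univ i)) T.2⟩)
  constructor
  · intro T T' h
    apply Subtype.ext
    apply DFSTree.eq_of_depth_eq
    intro i
    exact congrFun (congrArg Subtype.val h) i
  · rintro ⟨d, hz, hb⟩
    refine ⟨⟨mkT n d hz, ?_⟩, ?_⟩
    · apply Finset.sup_le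
      intro i _
      rw [mkT_depth hz i]
      exact hb i
    · apply Subtype.ext
      funext i
      exact mkT_depth hz i

lemma zagL_ofFn (hn : 0 < n) {d : Fin n → ℕ} (hz : IsZag d) : ZagL (List.ofFn d) := by
  have hlen : (List.ofFn d).length = n := List.length_ofFn
  constructor
  · rw [List.getD_eq_getElem _ _ (by omega), List.getElem_ofFn]
    exact hz.1 hn
  · intro i hi
    rw [hlen] at hi
    rw [List.getD_eq_getElem _ _ (by omega), List.getD_eq_getElem _ _ (by omega),
      List.getElem_ofFn, List.getElem_ofFn]
    exact hz.2.2 i hi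

/-- A bracketing realizing a given zag sequence. -/
noncomputable def realizeT (hn : 0 < n) (d : Fin n → ℕ) (hz : IsZag d) : BTree :=
  Classical.choose (exists_tree_of_zagL (List.ofFn d)
    (by rw [List.length_ofFn]; omega) (zagL_ofFn hn hz))

lemma realizeT_depths (hn : 0 < n) (d : Fin n → ℕ) (hz : IsZag d) :
    (realizeT hn d hz).depths = List.ofFn d :=
  Classical.choose_spec (exists_tree_of_zagL (List.ofFn d)
    (by rw [List.length_ofFn]; omega) (zagL_ofFn hn hz))

lemma realizeT_size (hn : 0 < n) (d : Fin n → ℕ) (hz : IsZag d) :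
    (realizeT hn d hz).size = n := by
  rw [← depths_length, realizeT_depths hn d hz, List.length_ofFn]

lemma realizeT_getD (hn : 0 < n) (d : Fin n → ℕ) (hz : IsZag d) (i : Fin n) :
    (realizeT hn d hz).depths.getD (i : ℕ) 0 = d i := by
  rw [realizeT_depths hn d hz,
    List.getD_eq_getElem _ _ (by rw [List.length_ofFn]; exact i.isLt), List.getElem_ofFn]

noncomputable def equivSpec (hn : 0 < n) (hℓ : 1 ≤ ℓ) :
    ZagBdd n ℓ ≃
      {g : (ℕ → Option (Fin (ℓ + 1))) → Option (Fin (ℓ + 1)) |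
        ∃ t : BTree, t.size = n ∧ g = BTree.termOp (gaOp (Epath ℓ)) t} := by
  apply Equiv.ofBijective (f := fun dd =>
    ⟨BTree.termOp (gaOp (Epath ℓ)) (realizeT hn dd.1 dd.2.1),
      ⟨realizeT hn dd.1 dd.2.1, realizeT_size hn dd.1 dd.2.1, rfl⟩⟩)
  constructor
  · rintro ⟨d, hz, hb⟩ ⟨d', hz', hb'⟩ h
    have heq := congrArg Subtype.val h
    rw [termOp_eq_iff ℓ n hn _ _ (realizeT_size hn d hz) (realizeT_size hn d' hz')] at heq
    apply Subtype.ext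
    funext i
    have := heq (i : ℕ) i.isLt
    rw [show ((i : ℕ)) = ((i : Fin n) : ℕ) from rfl] at this
    rw [realizeT_getD hn d hz i, realizeT_getD hn d' hz' i] at this
    have b1 := hb i
    have b2 := hb' i
    show d i = d' i
    omega
  · rintro ⟨g, t, hts, rfl⟩
    have hzl := zagL_depths t
    have hlen : t.depths.length = n := by rw [depths_length, hts]
    set d : Fin n → ℕ := fun i => min (t.depths.getD (i : ℕ) 0) ℓ with hd
    have hzd : IsZag d := by
      refine ⟨?_, ?_, ?_⟩
      · intro h
        show min (t.depths.getD ((⟨0, h⟩ : Fin n) : ℕ) 0) ℓ = 0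
        rw [show ((⟨0, h⟩ : Fin n) : ℕ) = 0 from rfl, depths_getD_zero]
        omega
      · intro h
        show min (t.depths.getD ((⟨1, h⟩ : Fin n) : ℕ) 0) ℓ = 1
        rw [show ((⟨1, h⟩ : Fin n) : ℕ) = 1 from rfl]
        have hstep := hzl.2 0 (by omega)
        simp only [Nat.zero_add] at hstep
        have h00 := depths_getD_zero t
        omega
      · intro i h
        show 1 ≤ min (t.depths.getD ((⟨i + 1, h⟩ : Fin n) : ℕ) 0) ℓ ∧
          min (t.depths.getD ((⟨i + 1, h⟩ : Fin n) : ℕ) 0) ℓ ≤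
            min (t.depths.getD ((⟨i, Nat.lt_of_succ_lt h⟩ : Fin n) : ℕ) 0) ℓ + 1
        rw [show ((⟨i + 1, h⟩ : Fin n) : ℕ) = i + 1 from rfl,
          show ((⟨i, Nat.lt_of_succ_lt h⟩ : Fin n) : ℕ) = i from rfl]
        have hstep := hzl.2 i (by omega)
        omega
    have hbd : ∀ i, d i ≤ ℓ := fun i => Nat.min_le_right _ _
    refine ⟨⟨d, hzd, hbd⟩, ?_⟩
    apply Subtype.ext
    show BTree.termOp _ (realizeT hn d hzd) = BTree.termOp _ t
    rw [termOp_eq_iff ℓ n hn _ _ (realizeT_size hn d hzd) hts]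
    intro i hi
    rw [show i = ((⟨i, hi⟩ : Fin n) : ℕ) from rfl, realizeT_getD hn d hzd ⟨i, hi⟩]
    show min (min (t.depths.getD ((⟨i, hi⟩ : Fin n) : ℕ) 0) ℓ) ℓ = _
    omega

end Proof5f

end AssocSpec

open AssocSpec in
/-- For the directed path `v₀ → v₁ → ⋯ → v_ℓ` of length
`ℓ ≥ 1` with a loop on the last vertex, the associative spectrum of the graph
algebra is `s_n = t_ℓ(n)`, where `t_h(n)` is the number of DFS trees of size
`n` of height at most `h`. -/
theorem stmt5 (ℓ : ℕ) (hℓ : 1 ≤ ℓ) (n : ℕ) (hn : 1 ≤ n) :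
    spectrum (gaOp (fun i j : Fin (ℓ + 1) =>
      (j : ℕ) = (i : ℕ) + 1 ∨ ((i : ℕ) = ℓ ∧ (j : ℕ) = ℓ))) n = tcount ℓ n := by
  show spectrum (gaOp (Epath ℓ)) n = tcount ℓ n
  unfold AssocSpec.spectrum AssocSpec.tcount
  rw [← Nat.card_coe_set_eq]
  exact Nat.card_congr ((equivSpec (show 0 < n from hn) hℓ).symm.trans (equivDFS n ℓ).symm)
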